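/- Let f, g : ℝ → ℝ with f left continuous of locally bounded variation and g continuous of locally bounded variation, both restricted to an interval [a,b]. If f_n → f pointwise on [a,b] with uniformly bounded total variations V_{f_n}[a,b] ≤ C, and g is continuous with compact support in (a,b), then ∫_a^b g dμ_{f_n} → ∫_a^b g dμ_f, where μ_h denotes the Lebesgue–Stieltjes signed measure of h. -/

import Mathlib

open MeasureTheory Set Filter Topology Real

/-- Mixed second-order increment of a two-variable function over a rectangle. -/
noncomputable def mixedInc (f : ℝ → ℝ → ℝ) (s₁ s₂ x₁ x₂ : ℝ) : ℝ :=
  f s₂ x₂ - f s₂ x₁ - f s₁ x₂ + f s₁ x₁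

/-- Two-dimensional variation of `f` on the rectangle `[t,s] × [a,x]`:
supremum over grid partitions of sums of absolute mixed second-order increments. -/
noncomputable def var2 (f : ℝ → ℝ → ℝ) (t s a x : ℝ) : ENNReal :=
  ⨆ m : ℕ, ⨆ n : ℕ, ⨆ σ : Fin (m+1) → ℝ, ⨆ τ : Fin (n+1) → ℝ,
    ⨆ _ : StrictMono σ ∧ StrictMono τ ∧ σ 0 = t ∧ σ (Fin.last m) = s ∧
      τ 0 = a ∧ τ (Fin.last n) = x,
    ∑ i : Fin m, ∑ j : Fin n,
      ENNReal.ofReal |mixedInc f (σ i.castSucc) (σ i.succ) (τ j.castSucc) (τ j.succ)|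

/-- One-dimensional total variation of `g` on `[a,b]`. -/
noncomputable def var1 (g : ℝ → ℝ) (a b : ℝ) : ENNReal :=
  ⨆ n : ℕ, ⨆ τ : Fin (n+1) → ℝ,
    ⨆ _ : StrictMono τ ∧ τ 0 = a ∧ τ (Fin.last n) = b,
    ∑ j : Fin n, ENNReal.ofReal |g (τ j.succ) - g (τ j.castSucc)|

/-- `f` is monotonically increasing in the two-dimensional sense. -/
def Inc2 (f : ℝ → ℝ → ℝ) : Prop :=
  ∀ s₁ s₂ x₁ x₂ : ℝ, s₁ ≤ s₂ → x₁ ≤ x₂ → 0 ≤ mixedInc f s₁ s₂ x₁ x₂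

/-- Joint left continuity of a two-variable function at `(s,x)`:
continuity along monotone approach from below in both variables. -/
def LeftCont2At (f : ℝ → ℝ → ℝ) (s x : ℝ) : Prop :=
  ∀ u v : ℕ → ℝ, Monotone u → Monotone v → (∀ k, u k ≤ s) → (∀ k, v k ≤ x) →
    Tendsto u atTop (𝓝 s) → Tendsto v atTop (𝓝 x) →
    Tendsto (fun k => f (u k) (v k)) atTop (𝓝 (f s x))

/-- `g` has left derivative `d` at `x`. -/
def HasLeftDeriv (g : ℝ → ℝ) (x d : ℝ) : Prop :=
  Tendsto (fun h => (g x - g (x - h)) / h) (𝓝[>] (0:ℝ)) (𝓝 d)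

namespace WCS


noncomputable def gp (a b : ℝ) (k j : ℕ) : ℝ := a + (b - a) * j / 2 ^ k
lemma gp_zero {a b : ℝ} (k : ℕ) : gp a b k 0 = a := by simp [gp]
lemma gp_last {a b : ℝ} (k : ℕ) : gp a b k (2 ^ k) = b := by
  have h : (2:ℝ) ^ k ≠ 0 := by positivity
  simp only [gp]; push_cast; rw [mul_div_assoc, div_self h, mul_one]; ring
lemma gp_succ_sub {a b : ℝ} (k j : ℕ) : gp a b k (j + 1) - gp a b k j = (b - a) / 2 ^ k := by
  have h : (2:ℝ) ^ k ≠ 0 := by positivity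
  simp only [gp]; push_cast; field_simp; ring
lemma gp_mono {a b : ℝ} (hab : a ≤ b) (k : ℕ) : Monotone (gp a b k) := by
  apply monotone_nat_of_le_succ
  intro j
  have := gp_succ_sub (a := a) (b := b) k j
  have h2 : (0:ℝ) ≤ (b - a) / 2 ^ k := div_nonneg (by linarith) (by positivity)
  linarith
lemma gp_strictMono {a b : ℝ} (hab : a < b) (k : ℕ) : StrictMono (gp a b k) := by
  apply strictMono_nat_of_lt_succ
  intro j
  have := gp_succ_sub (a := a) (b := b) k j
  have h2 : (0:ℝ) < (b - a) / 2 ^ k := div_pos (by linarith) (by positivity)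
  linarith
lemma gp_nest {a b : ℝ} (k d i : ℕ) : gp a b (k + d) (i * 2 ^ d) = gp a b k i := by
  have h : (2:ℝ) ^ k ≠ 0 := by positivity
  have h2 : (2:ℝ) ^ d ≠ 0 := by positivity
  simp only [gp, pow_add]
  push_cast
  field_simp
lemma gp_mem {a b : ℝ} (hab : a ≤ b) {k j : ℕ} (hj : j ≤ 2 ^ k) : gp a b k j ∈ Icc a b := by
  constructor
  · simpa [gp_zero] using gp_mono hab k (Nat.zero_le j)
  · simpa [gp_last] using gp_mono hab k hj

/-- Riemann–Stieltjes sum of `g dh` on the dyadic grid of level `k`. -/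
noncomputable def S (a b : ℝ) (g : ℝ → ℝ) (k : ℕ) (h : ℝ → ℝ) : ℝ :=
  ∑ j ∈ Finset.range (2 ^ k), g (gp a b k j) * (h (gp a b k (j + 1)) - h (gp a b k j))

lemma sum_grouped {M : Type*} [AddCommMonoid M] (F : ℕ → M) (n d : ℕ) :
    ∑ j ∈ Finset.range (n * d), F j
      = ∑ i ∈ Finset.range n, ∑ r ∈ Finset.range d, F (i * d + r) := by
  induction n with
  | zero => simp
  | succ n ih =>
    rw [Finset.sum_range_succ, ← ih, Nat.succ_mul, Finset.range_eq_Ico,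
      ← Finset.sum_Ico_consecutive (fun j => F j) (Nat.zero_le (n * d))
        (Nat.le_add_right (n * d) d), ← Finset.range_eq_Ico, Finset.sum_Ico_eq_sum_range]
    simp

/-- Dyadic variation sum is bounded by `var1`. -/
lemma dyadic_varsum_le {a b : ℝ} (hab : a < b) (h : ℝ → ℝ) (m : ℕ) :
    ENNReal.ofReal (∑ j ∈ Finset.range (2 ^ m), |h (gp a b m (j + 1)) - h (gp a b m j)|)
      ≤ var1 h a b := by
  rw [ENNReal.ofReal_sum_of_nonneg (fun j _ => abs_nonneg _)]
  have hτ : StrictMono (fun j : Fin (2 ^ m + 1) => gp a b m j) :=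
    fun i j hij => gp_strictMono hab m hij
  refine le_trans ?_ (le_iSup_of_le (2 ^ m) (le_iSup_of_le (fun j : Fin (2 ^ m + 1) => gp a b m j)
    (le_iSup_of_le ⟨hτ, by simp [gp_zero], by simp [Fin.last, gp_last]⟩ le_rfl)))
  rw [← Fin.sum_univ_eq_sum_range (fun j => ENNReal.ofReal |h (gp a b m (j + 1)) - h (gp a b m j)|)]
  refine le_of_eq (Finset.sum_congr rfl fun j _ => ?_)
  simp [Fin.val_succ, Fin.coe_castSucc]

/-- Claim 1: refining the grid changes the Stieltjes sum little. -/
lemma S_diff_bound {a b : ℝ} (hab : a < b) (g h : ℝ → ℝ) (k d : ℕ) (ε Vh : ℝ)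
    (hvar : ∑ j ∈ Finset.range (2 ^ (k + d)),
      |h (gp a b (k + d) (j + 1)) - h (gp a b (k + d) j)| ≤ Vh)
    (hmod : ∀ u v, u ∈ Icc a b → v ∈ Icc a b → |u - v| ≤ (b - a) / 2 ^ k → |g u - g v| ≤ ε) :
    |S a b g (k + d) h - S a b g k h| ≤ ε * Vh := by
  have hd : 0 < 2 ^ d := Nat.pow_pos (by norm_num)
  have hε : 0 ≤ ε := by
    have := hmod a a (Set.left_mem_Icc.2 hab.le) (Set.left_mem_Icc.2 hab.le)
      (by simp; exact div_nonneg (by linarith) (by positivity))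
    simpa using this
  have hm : 2 ^ (k + d) = 2 ^ k * 2 ^ d := pow_add 2 k d
  -- rewrite the coarse sum on the fine grid
  have key : S a b g k h = ∑ j ∈ Finset.range (2 ^ (k + d)),
      g (gp a b k (j / 2 ^ d)) * (h (gp a b (k + d) (j + 1)) - h (gp a b (k + d) j)) := by
    rw [hm, sum_grouped]
    unfold S
    apply Finset.sum_congr rfl
    intro i _
    have hdiv : ∀ r < 2 ^ d, (i * 2 ^ d + r) / 2 ^ d = i := by
      intro r hr
      rw [mul_comm, Nat.mul_add_div hd, Nat.div_eq_of_lt hr, add_zero]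
    rw [Finset.sum_congr rfl (fun r hr => by
      rw [hdiv r (Finset.mem_range.1 hr)]), ← Finset.mul_sum]
    congr 1
    have htel : ∑ r ∈ Finset.range (2 ^ d),
        (h (gp a b (k + d) (i * 2 ^ d + r + 1)) - h (gp a b (k + d) (i * 2 ^ d + r)))
        = h (gp a b k (i + 1)) - h (gp a b k i) := by
      have hts := Finset.sum_range_sub (fun r => h (gp a b (k + d) (i * 2 ^ d + r))) (2 ^ d)
      calc ∑ r ∈ Finset.range (2 ^ d),
            (h (gp a b (k + d) (i * 2 ^ d + r + 1)) - h (gp a b (k + d) (i * 2 ^ d + r)))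
          = h (gp a b (k + d) (i * 2 ^ d + 2 ^ d)) - h (gp a b (k + d) (i * 2 ^ d + 0)) := by
            rw [← hts]
            exact Finset.sum_congr rfl fun r _ => by rw [add_assoc]
        _ = h (gp a b k (i + 1)) - h (gp a b k i) := by
            rw [add_zero, show i * 2 ^ d + 2 ^ d = (i + 1) * 2 ^ d by ring, gp_nest, gp_nest]
    exact htel.symm
  rw [key]
  unfold S
  rw [← Finset.sum_sub_distrib]
  calc |∑ j ∈ Finset.range (2 ^ (k + d)),
        (g (gp a b (k + d) j) * (h (gp a b (k + d) (j + 1)) - h (gp a b (k + d) j))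
          - g (gp a b k (j / 2 ^ d)) * (h (gp a b (k + d) (j + 1)) - h (gp a b (k + d) j)))|
      ≤ ∑ j ∈ Finset.range (2 ^ (k + d)),
          ε * |h (gp a b (k + d) (j + 1)) - h (gp a b (k + d) j)| := by
        refine (Finset.abs_sum_le_sum_abs _ _).trans (Finset.sum_le_sum fun j hj => ?_)
        rw [← sub_mul, abs_mul]
        refine mul_le_mul_of_nonneg_right ?_ (abs_nonneg _)
        have hjm : j < 2 ^ (k + d) := Finset.mem_range.1 hj
        have hq : j / 2 ^ d < 2 ^ k := by
          rw [Nat.div_lt_iff_lt_mul hd, ← hm]; exact hjm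
        apply hmod
        · exact gp_mem hab.le hjm.le
        · exact gp_mem hab.le hq.le
        · have h1 : gp a b k (j / 2 ^ d) ≤ gp a b (k + d) j := by
            rw [← gp_nest k d (j / 2 ^ d)]
            exact gp_mono hab.le (k + d) (Nat.div_mul_le_self j (2 ^ d))
          have h2 : gp a b (k + d) j ≤ gp a b k (j / 2 ^ d + 1) := by
            rw [← gp_nest k d (j / 2 ^ d + 1)]
            apply gp_mono hab.le (k + d)
            have h6 := Nat.div_add_mod j (2 ^ d)
            have h7 := Nat.mod_lt j hd
            have h5 : j < (j / 2 ^ d + 1) * 2 ^ d := by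
              calc j = 2 ^ d * (j / 2 ^ d) + j % 2 ^ d := h6.symm
                _ < 2 ^ d * (j / 2 ^ d) + 2 ^ d := by omega
                _ = (j / 2 ^ d + 1) * 2 ^ d := by ring
            exact h5.le
          have h3 := gp_succ_sub (a := a) (b := b) k (j / 2 ^ d)
          rw [abs_le]
          constructor <;> [skip; skip] <;>
            · have h4 : (0:ℝ) ≤ (b - a) / 2 ^ k := div_nonneg (by linarith) (by positivity)
              linarith
    _ = ε * ∑ j ∈ Finset.range (2 ^ (k + d)),
          |h (gp a b (k + d) (j + 1)) - h (gp a b (k + d) j)| := by rw [Finset.mul_sum]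
    _ ≤ ε * Vh := mul_le_mul_of_nonneg_left hvar hε



lemma biUnion_Ico (y : ℕ → ℝ) (hy : Monotone y) (n : ℕ) :
    ⋃ j ∈ Finset.range n, Ico (y j) (y (j + 1)) = Ico (y 0) (y n) := by
  induction n with
  | zero => simp
  | succ n ih =>
    rw [Finset.range_add_one]
    rw [Finset.set_biUnion_insert, ih, Set.union_comm, Set.Ico_union_Ico_eq_Ico]
    · exact hy (Nat.zero_le n)
    · exact hy (Nat.le_succ n)

lemma Ico_pairwise_disjoint (y : ℕ → ℝ) (hy : Monotone y) :
    ∀ i j : ℕ, i ≠ j → Disjoint (Ico (y i) (y (i + 1))) (Ico (y j) (y (j + 1))) := by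
  intro i j hij
  apply Set.Ico_disjoint_Ico.mpr
  rcases hij.lt_or_gt with h | h
  · have h1 : y (i + 1) ≤ y j := hy h
    simp only [min_le_iff, le_max_iff]; tauto
  · have h1 : y (j + 1) ≤ y i := hy h
    simp only [min_le_iff, le_max_iff]; tauto

/-- Lemma A: grid Riemann–Stieltjes sum approximates the integral. -/
lemma integral_approx {a b : ℝ} (hab : a ≤ b) (μ : Measure ℝ) [IsFiniteMeasure μ]
    (g : ℝ → ℝ) (hg : Continuous g) (hgsupp : HasCompactSupport g) (hgb : g b = 0)
    (y : ℕ → ℝ) (N : ℕ) (hy : Monotone y) (hy0 : y 0 = a) (hyN : y N = b)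
    (ε : ℝ) (hε : 0 ≤ ε)
    (hmod : ∀ j < N, ∀ z ∈ Ico (y j) (y (j + 1)), |g z - g (y j)| ≤ ε) :
    |(∫ x in Icc a b, g x ∂μ) -
      ∑ j ∈ Finset.range N, g (y j) * (μ (Ico (y j) (y (j + 1)))).toReal|
      ≤ ε * (μ (Icc a b)).toReal := by
  have hint : Integrable g μ := hg.integrable_of_hasCompactSupport hgsupp
  have hmeas : ∀ j : ℕ, MeasurableSet (Ico (y j) (y (j + 1))) := fun j => measurableSet_Ico
  have hdisj := Ico_pairwise_disjoint y hy
  have hIcoN : Ico a b = ⋃ j ∈ Finset.range N, Ico (y j) (y (j + 1)) := by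
    rw [biUnion_Ico y hy, hy0, hyN]
  -- integral splits
  have hsplit : (∫ x in Icc a b, g x ∂μ) =
      ∑ j ∈ Finset.range N, ∫ x in Ico (y j) (y (j + 1)), g x ∂μ := by
    have h1 : (∫ x in Icc a b, g x ∂μ) = (∫ x in Ico a b, g x ∂μ) + ∫ x in {b}, g x ∂μ := by
      rw [← setIntegral_union (by simp) (measurableSet_singleton b)
        hint.integrableOn hint.integrableOn, Set.Ico_union_right hab]
    have h2 : (∫ x in ({b} : Set ℝ), g x ∂μ) = 0 := by
      rw [integral_singleton, hgb, smul_zero]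
    rw [h1, h2, add_zero, hIcoN,
      integral_biUnion_finset _ (fun j _ => hmeas j)
        (fun i _ j _ hij => hdisj i j hij) (fun j _ => hint.integrableOn)]
  rw [hsplit, ← Finset.sum_sub_distrib]
  calc |∑ j ∈ Finset.range N,
        ((∫ x in Ico (y j) (y (j + 1)), g x ∂μ) - g (y j) * (μ (Ico (y j) (y (j + 1)))).toReal)|
      ≤ ∑ j ∈ Finset.range N, ε * (μ (Ico (y j) (y (j + 1)))).toReal := by
        refine (Finset.abs_sum_le_sum_abs _ _).trans (Finset.sum_le_sum fun j hj => ?_)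
        have hsub : (∫ x in Ico (y j) (y (j + 1)), g x ∂μ)
            - g (y j) * (μ (Ico (y j) (y (j + 1)))).toReal
            = ∫ x in Ico (y j) (y (j + 1)), (g x - g (y j)) ∂μ := by
          rw [integral_sub hint.integrableOn (integrableOn_const (measure_ne_top μ _)),
            setIntegral_const, smul_eq_mul, mul_comm]
          rfl
        rw [hsub, ← Real.norm_eq_abs]
        exact norm_setIntegral_le_of_norm_le_const (measure_lt_top μ _)
          (fun x hx => by rw [Real.norm_eq_abs]; exact hmod j (Finset.mem_range.1 hj) x hx)
    _ = ε * ∑ j ∈ Finset.range N, (μ (Ico (y j) (y (j + 1)))).toReal := by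
        rw [Finset.mul_sum]
    _ ≤ ε * (μ (Icc a b)).toReal := by
        refine mul_le_mul_of_nonneg_left ?_ hε
        have h3 : ∑ j ∈ Finset.range N, (μ (Ico (y j) (y (j + 1)))).toReal
            = (μ (Ico a b)).toReal := by
          rw [hIcoN, measure_biUnion_finset (fun i hi j hj hij => hdisj i j hij)
            (fun j _ => hmeas j), ENNReal.toReal_sum (fun j _ => measure_ne_top μ _)]
        rw [h3]
        exact ENNReal.toReal_mono (measure_ne_top μ _) (measure_mono Set.Ico_subset_Icc_self)


end WCS

/-- Weak convergence of Lebesgue–Stieltjes signed measures: if `f_n → f` pointwise on `[a,b]`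
with uniformly bounded total variations, then `∫ g dμ_{f_n} → ∫ g dμ_f` for every continuous `g`
with compact support in `(a,b)`. -/
theorem weak_convergence_stieltjes (f : ℝ → ℝ) (fs : ℕ → ℝ → ℝ) (g : ℝ → ℝ)
    (a b : ℝ) (hab : a < b) (C : ℝ)
    -- f is left continuous of locally bounded variation
    (hflc : ∀ x : ℝ, ∀ u : ℕ → ℝ, Monotone u → (∀ k, u k ≤ x) →
      Tendsto u atTop (𝓝 x) → Tendsto (fun k => f (u k)) atTop (𝓝 (f x)))
    (hfbv : var1 f a b ≠ ⊤)
    -- fₙ are left continuous with uniformly bounded variations, converging pointwise to f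
    (hfslc : ∀ n : ℕ, ∀ x : ℝ, ∀ u : ℕ → ℝ, Monotone u → (∀ k, u k ≤ x) →
      Tendsto u atTop (𝓝 x) → Tendsto (fun k => fs n (u k)) atTop (𝓝 (fs n x)))
    (hfsbv : ∀ n, var1 (fs n) a b ≤ ENNReal.ofReal C)
    (hconv : ∀ x ∈ Set.Icc a b, Tendsto (fun n => fs n x) atTop (𝓝 (f x)))
    -- g is continuous with compact support in (a,b)
    (hg : Continuous g) (hgsupp : HasCompactSupport g) (hgint : tsupport g ⊆ Set.Ioo a b)
    -- the signed Lebesgue–Stieltjes measures of fₙ and of f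
    (μp μm : ℕ → Measure ℝ) (νp νm : Measure ℝ)
    [∀ n, IsFiniteMeasure (μp n)] [∀ n, IsFiniteMeasure (μm n)]
    [IsFiniteMeasure νp] [IsFiniteMeasure νm]
    (hμ : ∀ n, ∀ x₁ x₂ : ℝ, a ≤ x₁ → x₁ ≤ x₂ → x₂ ≤ b →
      ((μp n) (Set.Ico x₁ x₂)).toReal - ((μm n) (Set.Ico x₁ x₂)).toReal = fs n x₂ - fs n x₁)
    (hν : ∀ x₁ x₂ : ℝ, a ≤ x₁ → x₁ ≤ x₂ → x₂ ≤ b →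
      (νp (Set.Ico x₁ x₂)).toReal - (νm (Set.Ico x₁ x₂)).toReal = f x₂ - f x₁) :
    Tendsto (fun n => (∫ x in Set.Icc a b, g x ∂(μp n)) - ∫ x in Set.Icc a b, g x ∂(μm n))
      atTop (𝓝 ((∫ x in Set.Icc a b, g x ∂νp) - ∫ x in Set.Icc a b, g x ∂νm)) := by
  classical
  have hga : g a = 0 := by
    apply image_eq_zero_of_notMem_tsupport
    intro hmem
    exact (lt_irrefl a) (hgint hmem).1
  have hgb : g b = 0 := by
    apply image_eq_zero_of_notMem_tsupport
    intro hmem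
    exact (lt_irrefl b) (hgint hmem).2
  have hgu : UniformContinuous g := hgsupp.uniformContinuous_of_continuous hg
  set Cf : ℝ := (var1 f a b).toReal with hCfdef
  set C' : ℝ := max C 0 with hC'def
  have hCf0 : 0 ≤ Cf := ENNReal.toReal_nonneg
  have hC'0 : 0 ≤ C' := le_max_right C 0
  have hten : Tendsto (fun m : ℕ => (b - a) / 2 ^ m) atTop (𝓝 0) := by
    apply Tendsto.div_atTop tendsto_const_nhds
    exact tendsto_pow_atTop_atTop_of_one_lt (by norm_num)
  -- dyadic variation bounds
  have hvarf : ∀ m : ℕ, ∑ j ∈ Finset.range (2 ^ m),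
      |f (WCS.gp a b m (j + 1)) - f (WCS.gp a b m j)| ≤ Cf := fun m =>
    (ENNReal.ofReal_le_iff_le_toReal hfbv).1 (WCS.dyadic_varsum_le hab f m)
  have hvarfs : ∀ n m : ℕ, ∑ j ∈ Finset.range (2 ^ m),
      |fs n (WCS.gp a b m (j + 1)) - fs n (WCS.gp a b m j)| ≤ C' := by
    intro n m
    refine (ENNReal.ofReal_le_ofReal_iff hC'0).1 ?_
    exact (WCS.dyadic_varsum_le hab (fs n) m).trans ((hfsbv n).trans
      (ENNReal.ofReal_le_ofReal (le_max_left C 0)))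
  -- grid Riemann sums tend to the set integral, for any finite measure
  have hSconv : ∀ (μ : Measure ℝ), IsFiniteMeasure μ →
      Tendsto (fun m => ∑ j ∈ Finset.range (2 ^ m), g (WCS.gp a b m j) *
        (μ (Ico (WCS.gp a b m j) (WCS.gp a b m (j + 1)))).toReal) atTop
        (𝓝 (∫ x in Icc a b, g x ∂μ)) := by
    intro μ hμfin
    rw [Metric.tendsto_atTop]
    intro ε hε
    have hMnn : (0:ℝ) ≤ (μ (Icc a b)).toReal := ENNReal.toReal_nonneg
    set M : ℝ := (μ (Icc a b)).toReal + 1 with hMdef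
    have hM0 : 0 < M := by linarith
    set ε₂ : ℝ := ε / (2 * M) with heps2
    have hε₂ : 0 < ε₂ := by positivity
    obtain ⟨δ, hδ, hδg⟩ := Metric.uniformContinuous_iff.1 hgu ε₂ hε₂
    obtain ⟨N, hN⟩ := (eventually_atTop).1 (hten.eventually (gt_mem_nhds hδ))
    refine ⟨N, fun m hm => ?_⟩
    have hmesh : (b - a) / 2 ^ m < δ := hN m hm
    have happrox := WCS.integral_approx hab.le μ g hg hgsupp hgb (WCS.gp a b m) (2 ^ m)
      (WCS.gp_mono hab.le m) (WCS.gp_zero m) (WCS.gp_last m) ε₂ hε₂.le ?_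
    · calc dist (∑ j ∈ Finset.range (2 ^ m), g (WCS.gp a b m j) *
            (μ (Ico (WCS.gp a b m j) (WCS.gp a b m (j + 1)))).toReal)
            (∫ x in Icc a b, g x ∂μ)
          = |(∫ x in Icc a b, g x ∂μ) - ∑ j ∈ Finset.range (2 ^ m), g (WCS.gp a b m j) *
            (μ (Ico (WCS.gp a b m j) (WCS.gp a b m (j + 1)))).toReal| := by
            rw [Real.dist_eq, abs_sub_comm]
        _ ≤ ε₂ * (μ (Icc a b)).toReal := happrox
        _ < ε := by
            have h1 : ε₂ * (μ (Icc a b)).toReal ≤ ε₂ * M := by nlinarith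
            have h2 : ε₂ * M = ε / 2 := by
              rw [heps2]; field_simp
            linarith
    · intro j hj z hz
      have hd1 := WCS.gp_succ_sub (a := a) (b := b) m j
      have hz1 : WCS.gp a b m j ≤ z := hz.1
      have hz2 : z < WCS.gp a b m (j + 1) := hz.2
      have hdist : dist z (WCS.gp a b m j) < δ := by
        rw [Real.dist_eq, abs_of_nonneg (by linarith)]
        linarith
      exact (hδg hdist).le
  -- the Stieltjes sums converge (in the grid level) to the integral differences
  set In : ℕ → ℝ := fun n =>
    (∫ x in Icc a b, g x ∂(μp n)) - ∫ x in Icc a b, g x ∂(μm n) with hIndef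
  set I : ℝ := (∫ x in Icc a b, g x ∂νp) - ∫ x in Icc a b, g x ∂νm with hIdef
  have hmemgrid : ∀ k : ℕ, ∀ j < 2 ^ k,
      a ≤ WCS.gp a b k j ∧ WCS.gp a b k j ≤ WCS.gp a b k (j + 1) ∧
        WCS.gp a b k (j + 1) ≤ b := by
    intro k j hj
    refine ⟨(WCS.gp_mem hab.le hj.le).1, WCS.gp_mono hab.le k (Nat.le_succ j),
      (WCS.gp_mem hab.le (Nat.succ_le_of_lt hj)).2⟩
  have hμIn : ∀ n, Tendsto (fun m => WCS.S a b g m (fs n)) atTop (𝓝 (In n)) := by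
    intro n
    have h1 := hSconv (μp n) inferInstance
    have h2 := hSconv (μm n) inferInstance
    refine Tendsto.congr (fun m => ?_) (h1.sub h2)
    rw [← Finset.sum_sub_distrib]
    unfold WCS.S
    refine Finset.sum_congr rfl fun j hj => ?_
    obtain ⟨m1, m2, m3⟩ := hmemgrid m j (Finset.mem_range.1 hj)
    rw [← hμ n _ _ m1 m2 m3]
    ring
  have hνI : Tendsto (fun m => WCS.S a b g m f) atTop (𝓝 I) := by
    have h1 := hSconv νp inferInstance
    have h2 := hSconv νm inferInstance
    refine Tendsto.congr (fun m => ?_) (h1.sub h2)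
    rw [← Finset.sum_sub_distrib]
    unfold WCS.S
    refine Finset.sum_congr rfl fun j hj => ?_
    obtain ⟨m1, m2, m3⟩ := hmemgrid m j (Finset.mem_range.1 hj)
    rw [← hν _ _ m1 m2 m3]
    ring
  -- uniform estimate: distance from the limit to the level-k sum
  have hkey : ∀ (h : ℝ → ℝ) (L Vh : ℝ) (k : ℕ) (ε₂ : ℝ),
      Tendsto (fun m => WCS.S a b g m h) atTop (𝓝 L) →
      (∀ m, ∑ j ∈ Finset.range (2 ^ m),
        |h (WCS.gp a b m (j + 1)) - h (WCS.gp a b m j)| ≤ Vh) →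
      (∀ u v, u ∈ Icc a b → v ∈ Icc a b → |u - v| ≤ (b - a) / 2 ^ k → |g u - g v| ≤ ε₂) →
      |L - WCS.S a b g k h| ≤ ε₂ * Vh := by
    intro h L Vh k ε₂ hlim hvar hmod
    have h2 : Tendsto (fun d => WCS.S a b g (k + d) h) atTop (𝓝 L) := by
      have h3 := hlim.comp (tendsto_add_atTop_nat k)
      refine h3.congr fun d => ?_
      rw [Function.comp_apply, Nat.add_comm]
    have h4 : Tendsto (fun d => |WCS.S a b g (k + d) h - WCS.S a b g k h|) atTop
        (𝓝 |L - WCS.S a b g k h|) := (h2.sub tendsto_const_nhds).abs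
    exact le_of_tendsto h4 (Eventually.of_forall fun d =>
      WCS.S_diff_bound hab g h k d ε₂ Vh (hvar (k + d)) hmod)
  -- final assembly
  rw [Metric.tendsto_atTop]
  intro ε hε
  set K : ℝ := C' + Cf + 1 with hKdef
  have hK : 0 < K := by linarith
  set ε₁ : ℝ := ε / (2 * K) with heps1
  have hε₁ : 0 < ε₁ := by positivity
  obtain ⟨δ, hδ, hδg⟩ := Metric.uniformContinuous_iff.1 hgu ε₁ hε₁
  obtain ⟨k, hk⟩ := (eventually_atTop).1 (hten.eventually (gt_mem_nhds hδ))
  have hmesh : (b - a) / 2 ^ k < δ := hk k le_rfl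
  have hmod : ∀ u v, u ∈ Icc a b → v ∈ Icc a b → |u - v| ≤ (b - a) / 2 ^ k →
      |g u - g v| ≤ ε₁ := by
    intro u v _ _ hle
    have : dist u v < δ := by rw [Real.dist_eq]; linarith
    exact (hδg this).le
  have hbound1 : ∀ n, |In n - WCS.S a b g k (fs n)| ≤ ε₁ * C' := fun n =>
    hkey (fs n) (In n) C' k ε₁ (hμIn n) (hvarfs n) hmod
  have hbound2 : |I - WCS.S a b g k f| ≤ ε₁ * Cf :=
    hkey f I Cf k ε₁ hνI hvarf hmod
  have hSkconv : Tendsto (fun n => WCS.S a b g k (fs n)) atTop (𝓝 (WCS.S a b g k f)) := by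
    unfold WCS.S
    apply tendsto_finset_sum
    intro j hj
    have hj2 : j < 2 ^ k := Finset.mem_range.1 hj
    exact ((hconv _ (WCS.gp_mem hab.le (Nat.succ_le_of_lt hj2))).sub
      (hconv _ (WCS.gp_mem hab.le hj2.le))).const_mul _
  obtain ⟨N, hN⟩ := Metric.tendsto_atTop.1 hSkconv ε₁ hε₁
  refine ⟨N, fun n hn => ?_⟩
  have d1 := hbound1 n
  have d3 : |WCS.S a b g k (fs n) - WCS.S a b g k f| < ε₁ := by
    have := hN n hn
    rwa [Real.dist_eq] at this
  have htri : |In n - I| ≤ |In n - WCS.S a b g k (fs n)| +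
      |WCS.S a b g k (fs n) - WCS.S a b g k f| + |WCS.S a b g k f - I| := by
    calc |In n - I| = |(In n - WCS.S a b g k (fs n)) +
          (WCS.S a b g k (fs n) - WCS.S a b g k f) + (WCS.S a b g k f - I)| := by ring_nf
      _ ≤ _ := (abs_add_le _ _).trans (add_le_add (abs_add_le _ _) le_rfl)
  have d2 : |WCS.S a b g k f - I| ≤ ε₁ * Cf := by rwa [abs_sub_comm]
  have hfin : |In n - I| < ε := by
    have hsum : ε₁ * C' + ε₁ + ε₁ * Cf = ε₁ * K := by rw [hKdef]; ring
    have h5 : ε₁ * K = ε / 2 := by rw [heps1]; field_simp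
    linarith
  rw [Real.dist_eq]
  exact hfin
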